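/- Let f : ℝ^d → ℝ be L-smooth, A ∈ ℝ^{m×d}, Δ ∈ {-1,1}^m a vector of signs, and δ > 0. Define y_i = (f(x + (δ/‖AᵀΔ‖²) AᵀΔ) - f(x)) · ‖AᵀΔ‖²/(δ Δ_i) for each i ∈ [m] (assuming AᵀΔ ≠ 0). Then y = A∇f(x) + e₁ + e₂ where [e₁]_i = Σ_{j≠i} (Δ_j/Δ_i)⟨∇f(x), a_j⟩ and ‖e₂‖₂ ≤ (L/2) δ √m. -/

import Mathlib

open Real Finset

lemma descent_lemma {d : ℕ} (f : EuclideanSpace ℝ (Fin d) → ℝ) (L : ℝ)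
    (hf : Differentiable ℝ f)
    (hL : ∀ u v : EuclideanSpace ℝ (Fin d),
      ‖gradient f u - gradient f v‖ ≤ L * ‖u - v‖) (hL0 : 0 ≤ L)
    (x u : EuclideanSpace ℝ (Fin d)) :
    |f (x + u) - f x - (inner ℝ (gradient f x) u : ℝ)| ≤ L / 2 * ‖u‖ ^ 2 := by
  -- continuity of the gradient
  have hgc : Continuous (gradient f) := by
    have : LipschitzWith (Real.toNNReal L) (gradient f) := by
      apply LipschitzWith.of_dist_le_mul
      intro p q
      rw [dist_eq_norm, dist_eq_norm]
      refine (hL p q).trans (mul_le_mul_of_nonneg_right ?_ (norm_nonneg _))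
      exact Real.le_coe_toNNReal L
    exact this.continuous
  set φ : ℝ → ℝ := fun t => (inner ℝ (gradient f (x + t • u)) u : ℝ) with hφ
  have hderiv : ∀ t : ℝ, HasDerivAt (fun s : ℝ => f (x + s • u)) (φ t) t := by
    intro t
    have h2 : HasDerivAt (fun s : ℝ => x + s • u) u t := by
      simpa using ((hasDerivAt_id t).smul_const u).const_add x
    have h1 := ((hf (x + t • u)).hasGradientAt.hasFDerivAt).comp_hasDerivAt t h2
    exact h1
  have hφc : Continuous φ := by
    apply Continuous.inner (hgc.comp (by continuity)) continuous_const
  have hint : (∫ t in (0:ℝ)..1, φ t) = f (x + u) - f x := by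
    have := intervalIntegral.integral_eq_sub_of_hasDerivAt
      (fun t _ => hderiv t) (hφc.intervalIntegrable 0 1)
    simpa using this
  have hsub : f (x + u) - f x - (inner ℝ (gradient f x) u : ℝ)
      = ∫ t in (0:ℝ)..1, (φ t - (inner ℝ (gradient f x) u : ℝ)) := by
    rw [intervalIntegral.integral_sub (hφc.intervalIntegrable 0 1)
      (intervalIntegrable_const), hint]
    simp
  rw [hsub]
  have hb : ∀ᵐ t ∂MeasureTheory.volume.restrict (Set.uIoc (0:ℝ) 1),
      ‖φ t - (inner ℝ (gradient f x) u : ℝ)‖ ≤ L * ‖u‖ ^ 2 * t := by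
    refine MeasureTheory.ae_restrict_of_forall_mem measurableSet_uIoc ?_
    intro t ht
    rw [Set.uIoc_of_le zero_le_one] at ht
    have ht0 : 0 < t := ht.1
    have h1 : φ t - (inner ℝ (gradient f x) u : ℝ)
        = (inner ℝ (gradient f (x + t • u) - gradient f x) u : ℝ) := by
      rw [inner_sub_left]
    rw [h1]
    calc ‖(inner ℝ (gradient f (x + t • u) - gradient f x) u : ℝ)‖
        ≤ ‖gradient f (x + t • u) - gradient f x‖ * ‖u‖ := norm_inner_le_norm _ _
      _ ≤ (L * ‖x + t • u - x‖) * ‖u‖ :=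
          mul_le_mul_of_nonneg_right (hL _ _) (norm_nonneg _)
      _ = L * ‖u‖ ^ 2 * t := by
          have : x + t • u - x = t • u := by abel
          rw [this, norm_smul, Real.norm_eq_abs, abs_of_pos ht0]
          ring
  have hbound : IntervalIntegrable (fun t => L * ‖u‖ ^ 2 * t)
      MeasureTheory.volume 0 1 := (by continuity : Continuous _).intervalIntegrable 0 1
  have := intervalIntegral.norm_integral_le_of_norm_le zero_le_one (by rw [Set.uIoc_of_le zero_le_one] at hb; exact (MeasureTheory.ae_restrict_iff' measurableSet_Ioc).mp hb) hbound
  rw [Real.norm_eq_abs] at this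
  refine this.trans ?_
  have hI : (∫ t in (0:ℝ)..1, L * ‖u‖ ^ 2 * t) = L / 2 * ‖u‖ ^ 2 := by
    rw [intervalIntegral.integral_const_mul, integral_id]
    ring
  rw [hI]

/-- SPSA combined-rows measurement decomposition: with perturbation direction
`AᵀΔ` (a `±1`-signed combination of the rows `a j`), the measurement vector
decomposes as `y = A ∇f(x) + e₁ + e₂` where `[e₁]ᵢ = ∑_{j≠i} (Δⱼ/Δᵢ)⟨∇f(x), aⱼ⟩`
and `‖e₂‖ ≤ (L/2) δ √m`. -/
theorem stmt2 {d m : ℕ} (f : EuclideanSpace ℝ (Fin d) → ℝ) (L : ℝ) (δ : ℝ)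
    (hδ : 0 < δ)
    (hf : Differentiable ℝ f)
    (hL : ∀ u v : EuclideanSpace ℝ (Fin d),
      ‖gradient f u - gradient f v‖ ≤ L * ‖u - v‖)
    (a : Fin m → EuclideanSpace ℝ (Fin d))
    (Δ : Fin m → ℝ) (hΔ : ∀ i, Δ i = 1 ∨ Δ i = -1)
    (v : EuclideanSpace ℝ (Fin d)) (hv : v = ∑ j, Δ j • a j) (hv0 : v ≠ 0)
    (x : EuclideanSpace ℝ (Fin d)) (y : EuclideanSpace ℝ (Fin m))
    (hy : ∀ i, y i = (f (x + (δ / ‖v‖ ^ 2) • v) - f x) * (‖v‖ ^ 2 / (δ * Δ i))) :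
    ∃ e₂ : EuclideanSpace ℝ (Fin m),
      (∀ i, y i = (inner ℝ (a i) (gradient f x) : ℝ)
          + (∑ j ∈ univ \ {i}, (Δ j / Δ i) * (inner ℝ (gradient f x) (a j) : ℝ))
          + e₂ i) ∧
      ‖e₂‖ ≤ (L / 2) * δ * Real.sqrt m := by
  have hvn : (0:ℝ) < ‖v‖ := norm_pos_iff.mpr hv0
  have hΔabs : ∀ i, |Δ i| = 1 := fun i => by rcases hΔ i with h | h <;> simp [h]
  have hΔne : ∀ i, Δ i ≠ 0 := fun i => by
    intro h; have := hΔabs i; rw [h] at this; simp at this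
  have hL0 : 0 ≤ L := by
    have h := hL v 0
    rw [sub_zero] at h
    have h0 : (0:ℝ) ≤ L * ‖v‖ := le_trans (norm_nonneg _) h
    by_contra hneg
    push_neg at hneg
    nlinarith
  set G := gradient f x with hG
  set u : EuclideanSpace ℝ (Fin d) := (δ / ‖v‖ ^ 2) • v with hu
  set r : ℝ := f (x + u) - f x - (inner ℝ G u : ℝ) with hr
  have hub : ‖u‖ = δ / ‖v‖ := by
    rw [hu, norm_smul, Real.norm_eq_abs, abs_of_pos (by positivity)]
    field_simp
  have hrb : |r| ≤ L / 2 * (δ ^ 2 / ‖v‖ ^ 2) := by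
    have := descent_lemma f L hf hL hL0 x u
    rw [hub] at this
    rw [hr, hG]
    refine this.trans (le_of_eq ?_)
    field_simp
  refine ⟨WithLp.toLp 2 (fun i => r * (‖v‖ ^ 2 / (δ * Δ i))), ?_, ?_⟩
  · intro i
    have hGv : (inner ℝ G u : ℝ) = (δ / ‖v‖ ^ 2) * (inner ℝ G v : ℝ) :=
      real_inner_smul_right G v _
    have hfd : f (x + u) - f x = (inner ℝ G u : ℝ) + r := by rw [hr]; ring
    have hsum : (inner ℝ G v : ℝ) = ∑ j, Δ j * (inner ℝ G (a j) : ℝ) := by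
      rw [hv, inner_sum]
      exact Finset.sum_congr rfl fun j _ => real_inner_smul_right G (a j) (Δ j)
    have hc : (δ / ‖v‖ ^ 2) * (‖v‖ ^ 2 / (δ * Δ i)) = 1 / Δ i := by
      field_simp
    have key : y i = (inner ℝ G v : ℝ) / Δ i + r * (‖v‖ ^ 2 / (δ * Δ i)) := by
      calc y i = (δ / ‖v‖ ^ 2 * (inner ℝ G v : ℝ) + r) * (‖v‖ ^ 2 / (δ * Δ i)) := by
            rw [hy i, hfd, hGv]
        _ = (inner ℝ G v : ℝ) * ((δ / ‖v‖ ^ 2) * (‖v‖ ^ 2 / (δ * Δ i)))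
              + r * (‖v‖ ^ 2 / (δ * Δ i)) := by ring
        _ = (inner ℝ G v : ℝ) / Δ i + r * (‖v‖ ^ 2 / (δ * Δ i)) := by rw [hc]; ring
    rw [key, hsum, Finset.sum_div]
    have hsplit : ∑ j, Δ j * (inner ℝ G (a j) : ℝ) / Δ i
        = Δ i * (inner ℝ G (a i) : ℝ) / Δ i
          + ∑ j ∈ univ \ {i}, Δ j * (inner ℝ G (a j) : ℝ) / Δ i := by
      rw [← Finset.sum_sdiff (Finset.singleton_subset_iff.mpr (Finset.mem_univ i))]
      rw [Finset.sum_singleton]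
      ring
    rw [hsplit, mul_div_cancel_left₀ _ (hΔne i), real_inner_comm (a i) G]
    congr 1
    congr 1
    exact Finset.sum_congr rfl fun j _ => by ring
  · have hbd : ∀ i, |r * (‖v‖ ^ 2 / (δ * Δ i))| ≤ L / 2 * δ := by
      intro i
      rw [abs_mul, abs_div, abs_mul, hΔabs i, mul_one, abs_of_pos hδ,
        abs_of_pos (pow_pos hvn 2)]
      calc |r| * (‖v‖ ^ 2 / δ) ≤ (L / 2 * (δ ^ 2 / ‖v‖ ^ 2)) * (‖v‖ ^ 2 / δ) :=
            mul_le_mul_of_nonneg_right hrb (by positivity)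
        _ = L / 2 * δ := by field_simp
    rw [EuclideanSpace.norm_eq]
    have hsq : ∑ i, ‖r * (‖v‖ ^ 2 / (δ * Δ i))‖ ^ 2 ≤ ∑ _i : Fin m, (L / 2 * δ) ^ 2 := by
      refine Finset.sum_le_sum fun i _ => ?_
      rw [Real.norm_eq_abs]
      exact sq_le_sq' (by linarith [abs_nonneg (r * (‖v‖ ^ 2 / (δ * Δ i))), hbd i]) (hbd i)
    refine (Real.sqrt_le_sqrt hsq).trans ?_
    rw [Finset.sum_const, Finset.card_univ, Fintype.card_fin, nsmul_eq_mul,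
      Real.sqrt_mul (Nat.cast_nonneg m), Real.sqrt_sq (by positivity)]
    ring_nf
    rw [mul_comm]
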